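/- arXiv:1104.3090 — 2 statements merged into one kernel-verified Lean document; each statement's English description precedes it below -/
import Mathlib

section
/- Let G be a connected simple graph, let s,t be vertices of G, and let v be a cut vertex of G whose removal yields connected components C_1, …, C_l with l > 1. For each i, let G_i be the subgraph of G induced by C_i ∪ {v}, let s_i = s if s ∈ C_i and s_i = v otherwise, and let t_i = t if t ∈ C_i and t_i = v otherwise. Then OLP(G,s,t) ≥ Σ_{i=1}^{l} OLP(G_i, s_i, t_i). -/
open SimpleGraph

/-- The value `Σ_{e ∈ E} x e` of an assignment `x` on the edges of `G`. -/
noncomputable def hkValue {V : Type*} (G : SimpleGraph V) (x : Sym2 V → ℝ) : ℝ :=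
  ∑ᶠ e ∈ G.edgeSet, x e

/-- The total weight `Σ_{e ∈ δ(S)} x e` of the edges of `G` crossing the cut `(S, Sᶜ)`. -/
noncomputable def hkCut {V : Type*} (G : SimpleGraph V) (x : Sym2 V → ℝ)
    (S : Set V) : ℝ :=
  ∑ᶠ e ∈ {e ∈ G.edgeSet | ∃ a b, e = s(a, b) ∧ a ∈ S ∧ b ∉ S}, x e

/-- Feasibility for the Held-Karp path relaxation of graph-TSPP on `(G, s, t)`. -/
def HKPathFeasible {V : Type*} (G : SimpleGraph V) (s t : V) (x : Sym2 V → ℝ) : Prop :=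
  (∀ e, 0 ≤ x e) ∧
  ∀ S : Set V, S.Nonempty → S ≠ Set.univ →
    ((s ∈ S ↔ t ∈ S) → 2 ≤ hkCut G x S) ∧ (¬(s ∈ S ↔ t ∈ S) → 1 ≤ hkCut G x S)

/-- The optimum value `OLP(G, s, t)` of the Held-Karp path relaxation on `(G, s, t)`. -/
noncomputable def OLPpath {V : Type*} [Fintype V] (G : SimpleGraph V) (s t : V) : ℝ :=
  sInf {y | ∃ x, HKPathFeasible G s t x ∧ y = hkValue G x}

private lemma hk_finsum_mem_nonneg {α : Type*} [Finite α] {f : α → ℝ} (s : Set α)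
    (hf : ∀ e, 0 ≤ f e) : 0 ≤ ∑ᶠ e ∈ s, f e := by
  rw [finsum_mem_eq_finite_toFinset_sum f s.toFinite]
  exact Finset.sum_nonneg fun _ _ => hf _

private lemma hk_single_le_finsum {α : Type*} [Finite α] {f : α → ℝ} {s : Set α} {e : α}
    (he : e ∈ s) (hf : ∀ a, 0 ≤ f a) : f e ≤ ∑ᶠ a ∈ s, f a := by
  rw [finsum_mem_eq_finite_toFinset_sum f s.toFinite]
  exact Finset.single_le_sum (fun a _ => hf a) (by simpa using he)

private lemma OLPpath_le {V : Type*} [Fintype V] (G : SimpleGraph V) (s t : V)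
    (x : Sym2 V → ℝ) (hx : HKPathFeasible G s t x) : OLPpath G s t ≤ hkValue G x := by
  apply csInf_le
  · refine ⟨0, ?_⟩
    rintro y ⟨x', hx', rfl⟩
    exact hk_finsum_mem_nonneg _ hx'.1
  · exact ⟨x, hx, rfl⟩

private lemma hk_restrict_feasible {V : Type*} [Fintype V]
    (G : SimpleGraph V) (s t v : V) (W : Set V) (hvW : v ∈ W)
    (hsepW : ∀ a b, G.Adj a b → a ∉ W → b ∈ W → b = v)
    (s' t' : W)
    (hs' : ((s' : V) = s ∧ s ∈ W) ∨ ((s' : V) = v ∧ (s ∈ W → s = v)))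
    (ht' : ((t' : V) = t ∧ t ∈ W) ∨ ((t' : V) = v ∧ (t ∈ W → t = v)))
    (x : Sym2 V → ℝ) (hx : HKPathFeasible G s t x) :
    HKPathFeasible (G.induce W) s' t' (fun e => x (Sym2.map Subtype.val e)) := by
  classical
  refine ⟨fun e => hx.1 _, ?_⟩
  intro S' hS' hS'u
  set vv : W := ⟨v, hvW⟩ with hvv
  set S : Set V := {u | if h : u ∈ W then (⟨u, h⟩ : W) ∈ S' else vv ∈ S'} with hSdef
  have memS : ∀ u (h : u ∈ W), (u ∈ S ↔ (⟨u, h⟩ : W) ∈ S') := by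
    intro u h
    simp only [hSdef, Set.mem_setOf_eq, dif_pos h]
  have memS' : ∀ u, u ∉ W → (u ∈ S ↔ vv ∈ S') := by
    intro u h
    simp only [hSdef, Set.mem_setOf_eq, dif_neg h]
  have hSne : S.Nonempty := by
    obtain ⟨⟨u, hu⟩, hm⟩ := hS'
    exact ⟨u, (memS u hu).2 hm⟩
  have hSnu : S ≠ Set.univ := by
    intro h
    apply hS'u
    apply Set.eq_univ_iff_forall.2
    rintro ⟨u, hu⟩
    exact (memS u hu).1 (by rw [h]; trivial)
  have htrans : ∀ (w : V) (w' : W),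
      ((w' : V) = w ∧ w ∈ W) ∨ ((w' : V) = v ∧ (w ∈ W → w = v)) →
      (w ∈ S ↔ w' ∈ S') := by
    rintro w w' (⟨hw, hwW⟩ | ⟨hw, hwv⟩)
    · have hww : w' = ⟨w, hwW⟩ := Subtype.ext hw
      rw [memS w hwW, hww]
    · have hww : w' = vv := Subtype.ext hw
      by_cases hwW : w ∈ W
      · have hwv2 := hwv hwW
        rw [hwv2, memS v hvW, hww]
      · rw [memS' w hwW, hww]
  have hside : ∀ a b, G.Adj a b → a ∉ W → ((a ∈ S ↔ vv ∈ S') ∧ (b ∈ S ↔ vv ∈ S')) := by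
    intro a b hab haW
    refine ⟨memS' a haW, ?_⟩
    by_cases hbW : b ∈ W
    · have hbv := hsepW a b hab haW hbW
      subst hbv
      rw [memS b hvW]
    · exact memS' b hbW
  have himg :
      Sym2.map (Subtype.val : W → V) ''
        {e ∈ (G.induce W).edgeSet | ∃ a b, e = s(a, b) ∧ a ∈ S' ∧ b ∉ S'}
      = {e ∈ G.edgeSet | ∃ a b, e = s(a, b) ∧ a ∈ S ∧ b ∉ S} := by
    ext e
    constructor
    · rintro ⟨e', ⟨he'E, a', b', rfl, ha', hb'⟩, rfl⟩
      rw [Sym2.map_pair_eq]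
      have hadj : G.Adj a' b' := he'E
      refine ⟨hadj, a', b', rfl, ?_, ?_⟩
      · exact (memS a' a'.2).2 (by rwa [Subtype.coe_eta])
      · intro h
        exact hb' (by rw [← Subtype.coe_eta b' b'.2]; exact (memS b' b'.2).1 h)
    · rintro ⟨heE, a, b, rfl, ha, hb⟩
      have hadj : G.Adj a b := heE
      have haW : a ∈ W := by
        by_contra h
        obtain ⟨h1, h2⟩ := hside a b hadj h
        exact hb (h2.2 (h1.1 ha))
      have hbW : b ∈ W := by
        by_contra h
        obtain ⟨h1, h2⟩ := hside b a hadj.symm h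
        exact hb (h1.2 (h2.1 ha))
      refine ⟨s(⟨a, haW⟩, ⟨b, hbW⟩), ⟨hadj, ⟨a, haW⟩, ⟨b, hbW⟩, rfl, ?_, ?_⟩, ?_⟩
      · exact (memS a haW).1 ha
      · exact fun h => hb ((memS b hbW).2 h)
      · rw [Sym2.map_pair_eq]
  have hcuteq : hkCut (G.induce W) (fun e => x (Sym2.map Subtype.val e)) S' = hkCut G x S := by
    rw [hkCut, hkCut, ← himg,
      finsum_mem_image ((Sym2.map.injective Subtype.val_injective).injOn)]
  have hsS := htrans s s' hs'
  have htS := htrans t t' ht'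
  obtain ⟨hc2, hc1⟩ := hx.2 S hSne hSnu
  constructor
  · intro h
    rw [hcuteq]
    exact hc2 (hsS.trans (h.trans htS.symm))
  · intro h
    rw [hcuteq]
    exact hc1 (fun hh => h (hsS.symm.trans (hh.trans htS)))

private lemma hk_value_restrict {V : Type*} [Fintype V]
    (G : SimpleGraph V) (W : Set V) (x : Sym2 V → ℝ) :
    hkValue (G.induce W) (fun e => x (Sym2.map Subtype.val e))
      = ∑ᶠ e ∈ {e ∈ G.edgeSet | ∀ u ∈ e, u ∈ W}, x e := by
  rw [hkValue, ← finsum_mem_image ((Sym2.map.injective Subtype.val_injective).injOn)]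
  have hset : Sym2.map (Subtype.val : W → V) '' (G.induce W).edgeSet
      = {e ∈ G.edgeSet | ∀ u ∈ e, u ∈ W} := by
    ext e
    constructor
    · rintro ⟨e', he', rfl⟩
      revert he'
      induction e' using Sym2.ind with
      | _ a b =>
        intro he'
        have hadj : G.Adj a b := he'
        rw [Sym2.map_pair_eq]
        refine ⟨hadj, ?_⟩
        intro u hu
        rcases Sym2.mem_iff.1 hu with h | h <;> subst h <;> exact Subtype.coe_prop _
    · intro he
      revert he
      induction e using Sym2.ind with
      | _ a b =>
        rintro ⟨heE, hmem⟩
        have ha : a ∈ W := hmem a (Sym2.mem_mk_left a b)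
        have hb : b ∈ W := hmem b (Sym2.mem_mk_right a b)
        have hadj : G.Adj a b := heE
        exact ⟨s(⟨a, ha⟩, ⟨b, hb⟩), hadj, by rw [Sym2.map_pair_eq]⟩
  rw [hset]

/-- Let `G` be connected, `v` a cut vertex whose removal yields the
connected components `C 0, …, C (l-1)` (`l > 1`), let `G_i` be the subgraph induced
by `C i ∪ {v}`, and let `s_i`/`t_i` be `s`/`t` if they lie in `C i` and `v`
otherwise. Then `OLP(G,s,t) ≥ Σ_i OLP(G_i, s_i, t_i)`. -/
theorem heldKarpPath_superadditive_at_cut_vertex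
    {V : Type*} [Fintype V] [DecidableEq V]
    (G : SimpleGraph V)
    (hconn : G.Connected)
    (s t v : V)
    (l : ℕ) (hl : 1 < l) (C : Fin l → Finset V)
    (hdisj : ∀ i j, i ≠ j → Disjoint (C i) (C j))
    (hcover : ∀ u : V, u ≠ v ↔ ∃ i, u ∈ C i)
    (hcomp : ∀ i, (G.induce ((C i : Finset V) : Set V)).Connected)
    (hsep : ∀ i j, i ≠ j → ∀ a ∈ C i, ∀ b ∈ C j, ¬ G.Adj a b)
    (si ti : (i : Fin l) → ((insert v (C i) : Finset V) : Set V))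
    (hsi : ∀ i, (si i : V) = if s ∈ C i then s else v)
    (hti : ∀ i, (ti i : V) = if t ∈ C i then t else v) :
    ∑ i, OLPpath (G.induce ((insert v (C i) : Finset V) : Set V)) (si i) (ti i)
      ≤ OLPpath G s t := by
  classical
  have hTne : {y | ∃ x, HKPathFeasible G s t x ∧ y = hkValue G x}.Nonempty := by
    refine ⟨hkValue G (fun _ => 2), fun _ => 2, ⟨fun _ => by norm_num, ?_⟩, rfl⟩
    intro S hS hSu
    have key : ∀ b : ℝ, b ≤ 2 → b ≤ hkCut G (fun _ => (2:ℝ)) S := by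
      intro b hb
      obtain ⟨a, ha⟩ := hS
      obtain ⟨c, hc⟩ : ∃ c, c ∉ S := by
        by_contra h
        push_neg at h
        exact hSu (Set.eq_univ_iff_forall.2 h)
      obtain ⟨w⟩ := hconn.preconnected a c
      obtain ⟨d, _, hd1, hd2⟩ := w.exists_boundary_dart S ha hc
      have hmem : s(d.fst, d.snd) ∈ {e ∈ G.edgeSet | ∃ a b, e = s(a,b) ∧ a ∈ S ∧ b ∉ S} :=
        ⟨d.adj, d.fst, d.snd, rfl, hd1, hd2⟩
      exact hb.trans (hk_single_le_finsum (f := fun _ => (2:ℝ)) hmem (fun _ => by norm_num))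
    exact ⟨fun _ => key 2 le_rfl, fun _ => key 1 one_le_two⟩
  have hvW : ∀ i : Fin l, v ∈ ((insert v (C i) : Finset V) : Set V) := fun i => by simp
  have hWmem : ∀ (i : Fin l) u, u ∈ ((insert v (C i) : Finset V) : Set V) ↔ u = v ∨ u ∈ C i := by
    intro i u; simp
  have hsepW : ∀ i : Fin l, ∀ a b, G.Adj a b →
      a ∉ ((insert v (C i) : Finset V) : Set V) →
      b ∈ ((insert v (C i) : Finset V) : Set V) → b = v := by
    intro i a b hab haW hbW
    rcases (hWmem i b).1 hbW with h | h
    · exact h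
    · exfalso
      have hav : a ≠ v := fun he => haW (he ▸ hvW i)
      obtain ⟨j, hj⟩ := (hcover a).1 hav
      have hji : j ≠ i := fun he => haW ((hWmem i a).2 (Or.inr (he ▸ hj)))
      exact hsep j i hji a hj b h hab
  set E : Fin l → Set (Sym2 V) :=
    fun i => {e ∈ G.edgeSet | ∀ u ∈ e, u ∈ ((insert v (C i) : Finset V) : Set V)} with hE
  have hkey : ∀ (a b : V) (i j : Fin l), i ≠ j → s(a,b) ∈ E i → s(a,b) ∈ E j → False := by
    rintro a b i j hij ⟨heE, hi⟩ ⟨-, hj⟩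
    have hadj : G.Adj a b := heE
    have main : ∀ u, u ∈ s(a,b) → u ≠ v → False := by
      intro u hu huv
      rcases (hWmem i u).1 (hi u hu) with h | h
      · exact huv h
      rcases (hWmem j u).1 (hj u hu) with h' | h'
      · exact huv h'
      exact Finset.disjoint_left.1 (hdisj i j hij) h h'
    rcases eq_or_ne a v with hav | hav
    · have hbv : b ≠ v := fun he => hadj.ne (hav.trans he.symm)
      exact main b (Sym2.mem_mk_right a b) hbv
    · exact main a (Sym2.mem_mk_left a b) hav
  have hEdisj : Pairwise (Function.onFun Disjoint E) := by
    intro i j hij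
    rw [Function.onFun, Set.disjoint_left]
    intro e hei hej
    revert hei hej
    induction e using Sym2.ind with
    | _ a b => exact fun hei hej => hkey a b i j hij hei hej
  have hEcover : G.edgeSet = ⋃ i, E i := by
    ext e
    simp only [Set.mem_iUnion]
    constructor
    · intro he
      revert he
      induction e using Sym2.ind with
      | _ a b =>
        intro he
        have hadj : G.Adj a b := he
        have main : ∀ a b : V, G.Adj a b → a ≠ v → ∃ i, s(a,b) ∈ E i := by
          intro a b hab hav
          obtain ⟨i, hi⟩ := (hcover a).1 hav
          refine ⟨i, hab, ?_⟩
          intro u hu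
          rcases Sym2.mem_iff.1 hu with h | h
          · subst h; exact (hWmem i u).2 (Or.inr hi)
          · subst h
            rcases eq_or_ne u v with h' | h'
            · exact (hWmem i u).2 (Or.inl h')
            · obtain ⟨j, hj⟩ := (hcover u).1 h'
              rcases eq_or_ne j i with rfl | hji
              · exact (hWmem j u).2 (Or.inr hj)
              · exact absurd hab (hsep i j (Ne.symm hji) a hi u hj)
        rcases eq_or_ne a v with hav | hav
        · have hbv : b ≠ v := fun he' => hadj.ne (hav.trans he'.symm)
          obtain ⟨i, hi⟩ := main b a hadj.symm hbv
          exact ⟨i, by rwa [Sym2.eq_swap]⟩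
        · exact main a b hadj hav
    · rintro ⟨i, hi, -⟩
      exact hi
  have hmain : ∀ y ∈ {y | ∃ x, HKPathFeasible G s t x ∧ y = hkValue G x},
      ∑ i, OLPpath (G.induce ((insert v (C i) : Finset V) : Set V)) (si i) (ti i) ≤ y := by
    rintro y ⟨x, hx, rfl⟩
    have hval : hkValue G x = ∑ i, ∑ᶠ e ∈ E i, x e := by
      rw [hkValue, hEcover, finsum_mem_iUnion hEdisj (fun i => Set.toFinite _),
          finsum_eq_sum_of_fintype]
    have hstep : ∀ i : Fin l,
        OLPpath (G.induce ((insert v (C i) : Finset V) : Set V)) (si i) (ti i)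
          ≤ ∑ᶠ e ∈ E i, x e := by
      intro i
      have hs' : ((si i : V) = s ∧ s ∈ ((insert v (C i) : Finset V) : Set V)) ∨
          ((si i : V) = v ∧ (s ∈ ((insert v (C i) : Finset V) : Set V) → s = v)) := by
        by_cases hsC : s ∈ C i
        · exact Or.inl ⟨by rw [hsi i, if_pos hsC], (hWmem i s).2 (Or.inr hsC)⟩
        · refine Or.inr ⟨by rw [hsi i, if_neg hsC], ?_⟩
          intro hsW
          rcases (hWmem i s).1 hsW with h | h
          · exact h
          · exact absurd h hsC
      have ht' : ((ti i : V) = t ∧ t ∈ ((insert v (C i) : Finset V) : Set V)) ∨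
          ((ti i : V) = v ∧ (t ∈ ((insert v (C i) : Finset V) : Set V) → t = v)) := by
        by_cases htC : t ∈ C i
        · exact Or.inl ⟨by rw [hti i, if_pos htC], (hWmem i t).2 (Or.inr htC)⟩
        · refine Or.inr ⟨by rw [hti i, if_neg htC], ?_⟩
          intro htW
          rcases (hWmem i t).1 htW with h | h
          · exact h
          · exact absurd h htC
      have hfeas := hk_restrict_feasible G s t v _ (hvW i) (hsepW i) (si i) (ti i) hs' ht' x hx
      have hle := OLPpath_le _ (si i) (ti i) _ hfeas
      rw [hk_value_restrict] at hle
      exact hle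
    calc ∑ i, OLPpath (G.induce ((insert v (C i) : Finset V) : Set V)) (si i) (ti i)
        ≤ ∑ i, ∑ᶠ e ∈ E i, x e := Finset.sum_le_sum (fun i _ => hstep i)
      _ = hkValue G x := hval.symm
  exact le_csInf hTne hmain
end

section
/- Let G be a connected simple graph on n ≥ 3 vertices such that for every vertex v the subgraph induced on the remaining vertices is connected. Then for all vertices s,t of G, the graph distance satisfies dist_G(s,t) ≤ n/2. -/
open SimpleGraph

private lemma nat_ivt (f : ℕ → ℕ) (hstep : ∀ k, f (k + 1) ≤ f k + 1) (i : ℕ)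
    (h0 : f 0 ≤ i) : ∀ n, i ≤ f n → ∃ k ≤ n, f k = i := by
  intro n
  induction n with
  | zero => intro hn; exact ⟨0, le_refl 0, le_antisymm h0 hn⟩
  | succ m ih =>
    intro hn
    by_cases h : i ≤ f m
    · obtain ⟨k, hk, hfk⟩ := ih h
      exact ⟨k, hk.trans (Nat.le_succ m), hfk⟩
    · push_neg at h
      refine ⟨m + 1, le_refl _, le_antisymm ?_ hn⟩
      calc f (m + 1) ≤ f m + 1 := hstep m
        _ ≤ i := h

/-- On any walk from `s` to `t`, every distance value `i ≤ dist s t` is attained. -/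
private lemma exists_vertex_on_walk {V : Type*} {G : SimpleGraph V} {s t : V}
    (w : G.Walk s t) {i : ℕ} (hi : i ≤ G.dist s t) :
    ∃ x ∈ w.support, G.dist s x = i := by
  have hstep : ∀ k, G.dist s (w.getVert (k + 1)) ≤ G.dist s (w.getVert k) + 1 := by
    intro k
    by_cases hk : k < w.length
    · have hadj : G.Adj (w.getVert k) (w.getVert (k + 1)) := w.adj_getVert_succ hk
      have h1 : G.dist (w.getVert k) (w.getVert (k + 1)) ≤ 1 := by
        simpa using SimpleGraph.dist_le hadj.toWalk
      calc G.dist s (w.getVert (k + 1))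
          ≤ G.dist s (w.getVert k) + G.dist (w.getVert k) (w.getVert (k + 1)) := by
            by_cases hr : G.Reachable s (w.getVert k)
            · obtain ⟨p, hp⟩ := hr.exists_walk_length_eq_dist
              rw [← hp]
              calc G.dist s (w.getVert (k + 1)) ≤ (p.append hadj.toWalk).length :=
                    SimpleGraph.dist_le _
                _ = p.length + 1 := by simp
                _ ≤ p.length + G.dist (w.getVert k) (w.getVert (k+1)) := by
                    have : G.dist (w.getVert k) (w.getVert (k+1)) = 1 := by
                      simpa using hadj
                    omega
            · rw [SimpleGraph.dist_eq_zero_of_not_reachable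
                (fun h => hr (h.trans hadj.symm.reachable))]
              omega
        _ = G.dist s (w.getVert k) + 1 := by
            congr 1
            simpa using hadj
    · push_neg at hk
      rw [w.getVert_of_length_le hk, w.getVert_of_length_le (hk.trans (Nat.le_succ k))]
      omega
  have h0 : G.dist s (w.getVert 0) ≤ i := by simp [SimpleGraph.dist_self]
  have hn : i ≤ G.dist s (w.getVert w.length) := by simpa using hi
  obtain ⟨k, hkl', hk⟩ := nat_ivt (fun k => G.dist s (w.getVert k)) hstep i h0 w.length hn
  exact ⟨w.getVert k, SimpleGraph.Walk.mem_support_iff_exists_getVert.mpr ⟨k, rfl, hkl'⟩, hk⟩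

/-- In a 2-vertex-connected simple graph on `n ≥ 3` vertices, any
two vertices are at graph distance at most `n/2`. -/
theorem dist_le_half_card_of_two_connected
    {V : Type*} [Fintype V]
    (G : SimpleGraph V)
    (hn : 3 ≤ Fintype.card V)
    (hconn : G.Connected)
    (h2vc : ∀ v : V, (G.induce {u : V | u ≠ v}).Connected)
    (s t : V) :
    (G.dist s t : ℝ) ≤ Fintype.card V / 2 := by
  classical
  suffices h : 2 * G.dist s t ≤ Fintype.card V by
    have : (2 * (G.dist s t) : ℝ) ≤ (Fintype.card V : ℝ) := by exact_mod_cast h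
    linarith
  obtain ⟨d, hd⟩ : ∃ d, G.dist s t = d := ⟨_, rfl⟩
  rw [hd]
  by_cases hd2 : d ≤ 1
  · omega
  push_neg at hd2
  -- level sets
  set D : ℕ → Finset V := fun i => Finset.univ.filter (fun v => G.dist s v = i) with hD
  -- middle levels have at least 2 elements
  have hmid : ∀ i, 1 ≤ i → i ≤ d - 1 → 2 ≤ (D i).card := by
    intro i hi1 hi2
    obtain ⟨w, hw⟩ := hconn.exists_walk_length_eq_dist s t
    obtain ⟨x, hxw, hx⟩ := exists_vertex_on_walk w (by omega : i ≤ G.dist s t)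
    -- x ≠ s, x ≠ t
    have hxs : x ≠ s := by
      intro h; rw [h, SimpleGraph.dist_self] at hx; omega
    have hxt : x ≠ t := by
      intro h; rw [h] at hx; omega
    -- walk from s to t avoiding x
    have hsx : s ∈ {u : V | u ≠ x} := hxs.symm
    have htx : t ∈ {u : V | u ≠ x} := hxt.symm
    obtain ⟨w'⟩ := ((h2vc x).preconnected ⟨s, hsx⟩ ⟨t, htx⟩)
    let w'' : G.Walk s t := w'.map (SimpleGraph.Embedding.induce {u : V | u ≠ x}).toHom
    have hx'' : x ∉ w''.support := by
      intro hmem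
      rw [show w''.support = _ from SimpleGraph.Walk.support_map (f := (SimpleGraph.Embedding.induce {u : V | u ≠ x}).toHom) (p := w'), List.mem_map] at hmem
      obtain ⟨⟨a, ha⟩, _, hax⟩ := hmem
      exact ha hax
    obtain ⟨y, hyw, hy⟩ := exists_vertex_on_walk w'' (by omega : i ≤ G.dist s t)
    have hxy : x ≠ y := fun h => hx'' (h ▸ hyw)
    have hxD : x ∈ D i := by simp [hD, hx]
    have hyD : y ∈ D i := by simp [hD, hy]
    calc 2 = ({x, y} : Finset V).card := by rw [Finset.card_insert_of_notMem (by simpa using hxy), Finset.card_singleton]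
      _ ≤ (D i).card := Finset.card_le_card (by intro z hz; simp at hz; rcases hz with h | h <;> simp [h, hxD, hyD] at *)
  have h0 : 1 ≤ (D 0).card := Finset.card_pos.mpr ⟨s, by simp [hD, SimpleGraph.dist_self]⟩
  have hdl : 1 ≤ (D d).card := Finset.card_pos.mpr ⟨t, by simp [hD, hd]⟩
  -- the levels are pairwise disjoint
  have hdisj : Set.PairwiseDisjoint ↑(Finset.range (d + 1)) D := by
    intro a _ b _ hab
    simp only [Finset.disjoint_left, hD]
    intro z hza hzb
    simp only [Finset.mem_filter] at hza hzb
    exact hab (hza.2 ▸ hzb.2 ▸ rfl)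
  have hsum : ∑ i ∈ Finset.range (d + 1), (D i).card ≤ Fintype.card V := by
    rw [← Finset.card_biUnion hdisj]
    exact Finset.card_le_card (Finset.subset_univ _)
  have hlow : 2 * (d + 1) ≤ (∑ i ∈ Finset.range (d + 1), (D i).card) + 2 := by
    have : ∀ i ∈ Finset.range (d + 1),
        2 ≤ (D i).card + (if i = 0 then 1 else 0) + (if i = d then 1 else 0) := by
      intro i hi
      rw [Finset.mem_range] at hi
      by_cases hi0 : i = 0
      · rw [hi0, if_pos rfl, if_neg (show (0 : ℕ) ≠ d by omega)]; omega
      · by_cases hid : i = d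
        · rw [hid, if_neg (show d ≠ 0 by omega), if_pos rfl]; omega
        · have := hmid i (by omega) (by omega)
          rw [if_neg hi0, if_neg hid]; omega
    calc 2 * (d + 1) = ∑ _i ∈ Finset.range (d + 1), 2 := by
          rw [Finset.sum_const, Finset.card_range]; ring
      _ ≤ ∑ i ∈ Finset.range (d + 1),
            ((D i).card + (if i = 0 then 1 else 0) + (if i = d then 1 else 0)) :=
          Finset.sum_le_sum this
      _ = (∑ i ∈ Finset.range (d + 1), (D i).card)
            + (∑ i ∈ Finset.range (d + 1), (if i = 0 then 1 else 0))
            + (∑ i ∈ Finset.range (d + 1), (if i = d then 1 else 0)) := by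
          rw [Finset.sum_add_distrib, Finset.sum_add_distrib]
      _ = (∑ i ∈ Finset.range (d + 1), (D i).card) + 1 + 1 := by
          rw [Finset.sum_ite_eq' (Finset.range (d+1)) 0 (fun _ => 1),
            Finset.sum_ite_eq' (Finset.range (d+1)) d (fun _ => 1)]
          simp
      _ = (∑ i ∈ Finset.range (d + 1), (D i).card) + 2 := by omega
  have h2d : 2 * d ≤ ∑ i ∈ Finset.range (d + 1), (D i).card := by omega
  exact h2d.trans hsum
end
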